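/- arXiv:2601.15796 — 7 statements merged into one kernel-verified Lean document; each statement's English description precedes it below -/
import Mathlib

section
/- If a1² = 4a2 with a1 > 0, then for the matrix A = [[0,1],[-a2,-a1]] and any t ≥ 0, one has [1,0]·exp(tA)·[0,1]ᵀ = t·e^{-a1 t/2}. -/
open NormedSpace in
lemma exp_of_sq_eq_zero (M : Matrix (Fin 2) (Fin 2) ℝ) (h : M ^ 2 = 0) :
    NormedSpace.exp M = 1 + M := by
  rw [NormedSpace.exp_eq_tsum (𝕂 := ℝ)]
  beta_reduce
  have hz : ∀ n ∉ Finset.range 2, ((n.factorial : ℝ)⁻¹) • M ^ n = 0 := by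
    intro n hn
    rw [Finset.mem_range, not_lt] at hn
    obtain ⟨k, rfl⟩ := Nat.exists_eq_add_of_le hn
    rw [pow_add, h, zero_mul, smul_zero]
  rw [tsum_eq_sum hz]
  simp [Finset.sum_range_succ]

theorem stmt1 (a1 a2 t : ℝ) (ha1 : 0 < a1) (ha2 : a1 ^ 2 = 4 * a2) (ht : 0 ≤ t) :
    (NormedSpace.exp (t • !![(0 : ℝ), 1; -a2, -a1])) 0 1 = t * Real.exp (-a1 * t / 2) := by
  set N : Matrix (Fin 2) (Fin 2) ℝ := !![a1 / 2, 1; -a2, -a1 / 2] with hN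
  have hsplit : t • !![(0 : ℝ), 1; -a2, -a1] =
      Matrix.diagonal (fun _ => -a1 * t / 2) + t • N := by
    ext i j
    fin_cases i <;> fin_cases j <;>
      simp [hN, Matrix.diagonal, Matrix.smul_apply] <;> ring
  have hcomm : Commute (Matrix.diagonal (fun _ : Fin 2 => -a1 * t / 2)) (t • N) := by
    ext i j
    fin_cases i <;> fin_cases j <;>
      simp [hN, Matrix.mul_apply, Fin.sum_univ_two, Matrix.diagonal] <;> ring
  have hsq : (t • N) ^ 2 = 0 := by
    ext i j
    have h2 : a2 = a1 ^ 2 / 4 := by linarith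
    fin_cases i <;> fin_cases j <;>
      simp [hN, pow_two, Matrix.mul_apply, Fin.sum_univ_two, h2] <;> ring
  have h1 := Matrix.exp_add_of_commute _ _ hcomm
  rw [hsplit, h1, Matrix.exp_diagonal, exp_of_sq_eq_zero _ hsq]
  simp [Matrix.mul_apply, Fin.sum_univ_two, Matrix.diagonal, hN, ← Real.exp_eq_exp_ℝ]
  ring
end

section
/- For 0 < p, λ > 0 and 0 < θ < 1, one has ∫₀^∞ (e^{-λθs} - e^{-λs})^p ds = λ^{-1}(1-θ)^{-1} B(pθ/(1-θ), p+1), where B denotes the Beta function. -/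
open MeasureTheory

lemma realBeta_eq_integral {a b : ℝ} (ha : 0 < a) (hb : 0 < b) :
    ∫ x in Set.Ioo (0:ℝ) 1, x ^ (a-1) * (1-x) ^ (b-1)
      = Real.Gamma a * Real.Gamma b / Real.Gamma (a + b) := by
  have hI : Complex.betaIntegral a b
      = ((∫ x in (0:ℝ)..1, x ^ (a-1) * (1-x) ^ (b-1) : ℝ) : ℂ) := by
    rw [Complex.betaIntegral, ← intervalIntegral.integral_ofReal]
    refine intervalIntegral.integral_congr fun x hx => ?_
    rw [Set.uIcc_of_le zero_le_one] at hx
    push_cast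
    rw [Complex.ofReal_cpow hx.1, Complex.ofReal_cpow (by linarith [hx.2])]
    push_cast
    ring
  have hG := Complex.Gamma_mul_Gamma_eq_betaIntegral
    (s := (a:ℂ)) (t := (b:ℂ)) (by simpa using ha) (by simpa using hb)
  rw [hI, ← Complex.ofReal_add, Complex.Gamma_ofReal, Complex.Gamma_ofReal,
    Complex.Gamma_ofReal, ← Complex.ofReal_mul, ← Complex.ofReal_mul] at hG
  have hG' := Complex.ofReal_injective hG
  have hΓ : Real.Gamma (a + b) ≠ 0 := (Real.Gamma_pos_of_pos (by linarith)).ne'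
  rw [← integral_Ioc_eq_integral_Ioo, ← intervalIntegral.integral_of_le zero_le_one]
  field_simp
  linarith [hG']

/-- The Beta function `B(x,y) = Γ(x)Γ(y)/Γ(x+y)`. -/
noncomputable def realBeta (x y : ℝ) : ℝ :=
  Real.Gamma x * Real.Gamma y / Real.Gamma (x + y)

theorem stmt8 (p lam θ : ℝ) (hp : 0 < p) (hlam : 0 < lam) (hθ : θ ∈ Set.Ioo (0 : ℝ) 1) :
    ∫ s in Set.Ioi (0 : ℝ), (Real.exp (-lam * θ * s) - Real.exp (-lam * s)) ^ p
      = lam⁻¹ * (1 - θ)⁻¹ * realBeta (p * θ / (1 - θ)) (p + 1) := by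
  rw [realBeta]
  obtain ⟨hθ0, hθ1⟩ := hθ
  set c : ℝ := lam * (1 - θ) with hc
  have hc0 : 0 < c := mul_pos hlam (by linarith)
  set a : ℝ := p * θ / (1 - θ) with ha
  have ha0 : 0 < a := div_pos (mul_pos hp hθ0) (by linarith)
  have himg : (fun s => Real.exp (-c * s)) '' Set.Ioi 0 = Set.Ioo 0 1 := by
    ext x
    constructor
    · rintro ⟨s, hs, rfl⟩
      exact ⟨Real.exp_pos _, Real.exp_lt_one_iff.mpr (by nlinarith [Set.mem_Ioi.mp hs])⟩
    · rintro ⟨hx0, hx1⟩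
      refine ⟨-Real.log x / c, ?_, ?_⟩
      · have : Real.log x < 0 := Real.log_neg hx0 hx1
        exact Set.mem_Ioi.mpr (div_pos (by linarith) hc0)
      · simp only
        rw [show -c * (-Real.log x / c) = Real.log x by field_simp, Real.exp_log hx0]
  have hderiv : ∀ s ∈ Set.Ioi (0:ℝ), HasDerivWithinAt (fun s => Real.exp (-c * s))
      (Real.exp (-c * s) * (-c)) (Set.Ioi 0) s := by
    intro s _
    have : HasDerivAt (fun s : ℝ => Real.exp (-c * s)) (Real.exp (-c * s) * (-c * 1)) s :=
      ((hasDerivAt_id s).const_mul (-c)).exp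
    simpa using this.hasDerivWithinAt
  have hinj : Set.InjOn (fun s => Real.exp (-c * s)) (Set.Ioi 0) := by
    intro x _ y _ h
    have := Real.exp_eq_exp.mp h
    exact mul_left_cancel₀ (neg_ne_zero.mpr hc0.ne') this
  have key := integral_image_eq_integral_abs_deriv_smul measurableSet_Ioi hderiv hinj
    (fun x => x ^ (a-1) * (1-x) ^ ((p+1)-1))
  rw [himg] at key
  have hcongr : ∀ s ∈ Set.Ioi (0:ℝ),
      |Real.exp (-c * s) * (-c)| • (Real.exp (-c * s) ^ (a-1) * (1 - Real.exp (-c * s)) ^ ((p+1)-1))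
        = c * (Real.exp (-lam * θ * s) - Real.exp (-lam * s)) ^ p := by
    intro s hs
    have hs0 : 0 < s := Set.mem_Ioi.mp hs
    have h1 : |Real.exp (-c * s) * (-c)| = Real.exp (-c * s) * c := by
      rw [abs_mul, abs_of_pos (Real.exp_pos _), abs_neg, abs_of_pos hc0]
    have h2 : Real.exp (-c * s) ^ (a-1) = Real.exp (-c * s * (a-1)) := (Real.exp_mul _ _).symm
    have h3 : Real.exp (-c * s) * Real.exp (-c * s * (a-1)) = Real.exp (-lam * θ * s * p) := by
      rw [← Real.exp_add]
      congr 1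
      have : -c * s + -c * s * (a - 1) = -c * s * a := by ring
      have h1θ : (1:ℝ) - θ ≠ 0 := by linarith
      rw [this, hc, ha]
      field_simp
    have h4 : (1 : ℝ) - Real.exp (-c * s) ≥ 0 := by
      have : Real.exp (-c * s) ≤ 1 := (Real.exp_le_one_iff ).mpr (by nlinarith)
      linarith
    have h5 : Real.exp (-lam * θ * s * p) = Real.exp (-lam * θ * s) ^ p := Real.exp_mul _ _
    rw [smul_eq_mul, h1, h2, show (p+1)-1 = p by ring]
    calc Real.exp (-c*s) * c * (Real.exp (-c*s*(a-1)) * (1 - Real.exp (-c*s)) ^ p)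
        = c * ((Real.exp (-c*s) * Real.exp (-c*s*(a-1))) * (1 - Real.exp (-c*s)) ^ p) := by ring
      _ = c * ((Real.exp (-lam*θ*s)) ^ p * (1 - Real.exp (-c*s)) ^ p) := by rw [h3, h5]
      _ = c * ((Real.exp (-lam*θ*s) * (1 - Real.exp (-c*s))) ^ p) := by
          rw [← Real.mul_rpow (Real.exp_pos _).le h4]
      _ = c * (Real.exp (-lam * θ * s) - Real.exp (-lam * s)) ^ p := by
          congr 2
          rw [mul_sub, mul_one, ← Real.exp_add]
          congr 2
          rw [hc]; ring
  rw [setIntegral_congr_fun measurableSet_Ioi hcongr, integral_const_mul] at key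
  rw [realBeta_eq_integral ha0 (by linarith)] at key
  have hT : (∫ s in Set.Ioi (0:ℝ), (Real.exp (-lam * θ * s) - Real.exp (-lam * s)) ^ p)
      = c⁻¹ * (Real.Gamma a * Real.Gamma (p+1) / Real.Gamma (a + (p+1))) := by
    rw [eq_inv_mul_iff_mul_eq₀ hc0.ne']
    exact key.symm
  rw [hT, hc, mul_inv]
end

section
/- For each p > 0 there exists a constant C_p < ∞ such that for all λ > 0 and θ ∈ (0,1): ∫₀^∞ ((e^{-λθs} - e^{-λs})/(λ(1-θ)))^p ds ≤ C_p / (λ^{p+1} θ). -/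
open MeasureTheory

private lemma aux_int_exp (b : ℝ) (hb : 0 < b) :
    ∫ s in Set.Ioi (0:ℝ), Real.exp (-(b*s)) = 1/b := by
  have h := Real.integral_rpow_mul_exp_neg_mul_Ioi (a := 1) one_pos hb
  simpa [Real.rpow_one, Real.Gamma_one] using h

private lemma aux_int_exp_integrable (b : ℝ) (hb : 0 < b) :
    IntegrableOn (fun s : ℝ => Real.exp (-(b*s))) (Set.Ioi 0) := by
  simpa [neg_mul] using exp_neg_integrableOn_Ioi 0 hb

private lemma aux_int_poly (q b : ℝ) (hq : 0 < q) (hb : 0 < b) :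
    ∫ s in Set.Ioi (0:ℝ), s ^ q * Real.exp (-(b*s)) = (1/b)^(q+1) * Real.Gamma (q+1) := by
  have h := Real.integral_rpow_mul_exp_neg_mul_Ioi (a := q+1) (by linarith) hb
  simpa using h

private lemma aux_int_poly_integrable (q b : ℝ) (hq : 0 < q) (hb : 0 < b) :
    IntegrableOn (fun s : ℝ => s ^ q * Real.exp (-(b*s))) (Set.Ioi 0) := by
  have h := integrableOn_rpow_mul_exp_neg_mul_rpow (s := q) (p := 1) (b := b)
    (by linarith) one_pos hb
  simpa [Real.rpow_one] using h

theorem stmt9 (p : ℝ) (hp : 0 < p) :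
    ∃ C : ℝ, ∀ lam θ : ℝ, 0 < lam → θ ∈ Set.Ioo (0 : ℝ) 1 →
      ∫ s in Set.Ioi (0 : ℝ),
          ((Real.exp (-lam * θ * s) - Real.exp (-lam * s)) / (lam * (1 - θ))) ^ p
        ≤ C / (lam ^ (p + 1) * θ) := by
  refine ⟨2^p/p + (2/p)^(p+1) * Real.Gamma (p+1), fun lam θ hlam hθ => ?_⟩
  obtain ⟨hθ0, hθ1⟩ := hθ
  have h1θ : 0 < 1 - θ := by linarith
  have hden : 0 < lam * (1 - θ) := by positivity
  have hΓ : 0 ≤ (2/p)^(p+1) * Real.Gamma (p+1) := by positivity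
  have h2p : 0 ≤ 2^p/p := by positivity
  have hlp : 0 < lam ^ (p+1) := Real.rpow_pos_of_pos hlam _
  -- pointwise nonnegativity of the integrand
  have hfnn : ∀ s ∈ Set.Ioi (0:ℝ), 0 ≤
      ((Real.exp (-lam * θ * s) - Real.exp (-lam * s)) / (lam * (1 - θ))) := by
    intro s hs
    have hs0 : 0 < s := hs
    have : Real.exp (-lam * s) ≤ Real.exp (-lam * θ * s) := by
      apply Real.exp_le_exp.2; nlinarith
    have := sub_nonneg.2 this
    positivity
  by_cases hc : θ ≤ 1/2
  · -- small θ: bound by (2/lam) * exp(-lam θ s)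
    have hb : 0 < p * (lam * θ) := by positivity
    have hle : ∫ s in Set.Ioi (0:ℝ),
          ((Real.exp (-lam * θ * s) - Real.exp (-lam * s)) / (lam * (1 - θ))) ^ p
        ≤ ∫ s in Set.Ioi (0:ℝ), (2/lam)^p * Real.exp (-(p * (lam * θ) * s)) := by
      apply integral_mono_of_nonneg
      · filter_upwards [ae_restrict_mem measurableSet_Ioi] with s hs
        exact Real.rpow_nonneg (hfnn s hs) p
      · exact (aux_int_exp_integrable _ hb).const_mul _
      · filter_upwards [ae_restrict_mem measurableSet_Ioi] with s hs
        have hs0 : 0 < s := hs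
        have h1 : ((Real.exp (-lam * θ * s) - Real.exp (-lam * s)) / (lam * (1 - θ)))
            ≤ (2/lam) * Real.exp (-lam * θ * s) := by
          rw [div_le_iff₀ hden]
          have hE : 0 < Real.exp (-lam * θ * s) := Real.exp_pos _
          have hE2 : 0 < Real.exp (-lam * s) := Real.exp_pos _
          have hll : 2 / lam * lam = 2 := by field_simp
          nlinarith [mul_nonneg (by linarith : (0:ℝ) ≤ 1 - 2*θ) hE.le]
        calc ((Real.exp (-lam * θ * s) - Real.exp (-lam * s)) / (lam * (1 - θ))) ^ p
            ≤ ((2/lam) * Real.exp (-lam * θ * s)) ^ p :=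
              Real.rpow_le_rpow (hfnn s hs) h1 hp.le
          _ = (2/lam)^p * Real.exp (-(p * (lam * θ) * s)) := by
              rw [Real.mul_rpow (by positivity) (Real.exp_pos _).le, ← Real.exp_mul]
              ring_nf
    rw [integral_const_mul, aux_int_exp _ hb] at hle
    refine hle.trans ?_
    have heq : (2/lam)^p * (1 / (p * (lam * θ))) = (2^p/p) / (lam ^ (p+1) * θ) := by
      rw [Real.div_rpow (by norm_num) hlam.le, Real.rpow_add hlam, Real.rpow_one]
      field_simp
    rw [heq]
    gcongr
    linarith
  · -- large θ: bound by s * exp(-(lam/2) s)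
    push_neg at hc
    have hb : 0 < p * (lam/2) := by positivity
    have hle : ∫ s in Set.Ioi (0:ℝ),
          ((Real.exp (-lam * θ * s) - Real.exp (-lam * s)) / (lam * (1 - θ))) ^ p
        ≤ ∫ s in Set.Ioi (0:ℝ), s ^ p * Real.exp (-(p * (lam/2) * s)) := by
      apply integral_mono_of_nonneg
      · filter_upwards [ae_restrict_mem measurableSet_Ioi] with s hs
        exact Real.rpow_nonneg (hfnn s hs) p
      · exact aux_int_poly_integrable p _ hp hb
      · filter_upwards [ae_restrict_mem measurableSet_Ioi] with s hs
        have hs0 : 0 < s := hs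
        have h1 : ((Real.exp (-lam * θ * s) - Real.exp (-lam * s)) / (lam * (1 - θ)))
            ≤ s * Real.exp (-(lam/2) * s) := by
          have key : Real.exp (-lam * θ * s) - Real.exp (-lam * s)
              ≤ (lam * (1 - θ)) * (s * Real.exp (-lam * θ * s)) := by
            have hsplit : Real.exp (-lam * s)
                = Real.exp (-lam * θ * s) * Real.exp (-(lam * (1-θ) * s)) := by
              rw [← Real.exp_add]; ring_nf
            have hexp := Real.add_one_le_exp (-(lam * (1-θ) * s))
            have hE : 0 < Real.exp (-lam * θ * s) := Real.exp_pos _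
            rw [hsplit]
            nlinarith
          have h2 : Real.exp (-lam * θ * s) ≤ Real.exp (-(lam/2) * s) := by
            apply Real.exp_le_exp.2
            nlinarith [mul_nonneg (by linarith : (0:ℝ) ≤ θ - 1/2) (mul_pos hlam hs0).le]
          rw [div_le_iff₀ hden]
          calc Real.exp (-lam * θ * s) - Real.exp (-lam * s)
              ≤ (lam * (1 - θ)) * (s * Real.exp (-lam * θ * s)) := key
            _ ≤ (lam * (1 - θ)) * (s * Real.exp (-(lam/2) * s)) := by
                apply mul_le_mul_of_nonneg_left _ hden.le
                exact mul_le_mul_of_nonneg_left h2 hs0.le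
            _ = s * Real.exp (-(lam/2) * s) * (lam * (1 - θ)) := by ring
        calc ((Real.exp (-lam * θ * s) - Real.exp (-lam * s)) / (lam * (1 - θ))) ^ p
            ≤ (s * Real.exp (-(lam/2) * s)) ^ p :=
              Real.rpow_le_rpow (hfnn s hs) h1 hp.le
          _ = s ^ p * Real.exp (-(p * (lam/2) * s)) := by
              rw [Real.mul_rpow hs0.le (Real.exp_pos _).le, ← Real.exp_mul]
              ring_nf
    rw [aux_int_poly p _ hp hb] at hle
    refine hle.trans ?_
    have heq : (1 / (p * (lam/2)))^(p+1) = (2/p)^(p+1) / lam^(p+1) := by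
      rw [← Real.div_rpow (by positivity) hlam.le]
      congr 1
      field_simp
    rw [heq, div_mul_eq_mul_div, div_le_div_iff₀ hlp (by positivity)]
    nlinarith [mul_nonneg (mul_nonneg hΓ hlp.le) (by linarith : (0:ℝ) ≤ 1 - θ),
      mul_nonneg h2p hlp.le]
end

section
/- For λ > 0, θ ∈ (0,1) and τ ≥ 0: ∫₀^∞ ((e^{-λθ(s+τ)} - e^{-λ(s+τ)})/(λ(1-θ))) · ((e^{-λθs} - e^{-λs})/(λ(1-θ))) ds = (1/(2λ³(1-θ²)))·(e^{-λθτ}/θ − e^{-λτ}). -/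
open MeasureTheory Real Filter

lemma integral_exp_neg_mul_Ioi_zero {b : ℝ} (hb : 0 < b) :
    ∫ x in Set.Ioi (0 : ℝ), Real.exp (-b * x) = 1 / b := by
  have hderiv : ∀ x ∈ Set.Ici (0:ℝ), HasDerivAt (fun x => -Real.exp (-b * x) / b)
      (Real.exp (-b * x)) x := by
    intro x _
    have h1 : HasDerivAt (fun x : ℝ => -b * x) (-b) x := by
      simpa using (hasDerivAt_id x).const_mul (-b)
    have h2 := (Real.hasDerivAt_exp (-b * x)).comp x h1
    have h3 := (h2.neg).div_const b
    exact h3.congr_deriv (by field_simp)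
  have htend : Tendsto (fun x => -Real.exp (-b * x) / b) atTop (nhds 0) := by
    have h1 : Tendsto (fun x : ℝ => -b * x) atTop atBot :=
      tendsto_id.const_mul_atTop_of_neg (neg_lt_zero.mpr hb)
    have h2 : Tendsto (fun x => Real.exp (-b * x)) atTop (nhds 0) :=
      Real.tendsto_exp_atBot.comp h1
    simpa using (h2.neg).div_const b
  have h := integral_Ioi_of_hasDerivAt_of_tendsto' hderiv (exp_neg_integrableOn_Ioi 0 hb) htend
  rw [h]; field_simp
  simp

theorem stmt10 (lam θ τ : ℝ) (hlam : 0 < lam) (hθ : θ ∈ Set.Ioo (0 : ℝ) 1) (hτ : 0 ≤ τ) :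
    ∫ s in Set.Ioi (0 : ℝ),
        ((Real.exp (-lam * θ * (s + τ)) - Real.exp (-lam * (s + τ))) / (lam * (1 - θ))) *
          ((Real.exp (-lam * θ * s) - Real.exp (-lam * s)) / (lam * (1 - θ)))
      = 1 / (2 * lam ^ 3 * (1 - θ ^ 2)) * (Real.exp (-lam * θ * τ) / θ - Real.exp (-lam * τ)) := by
  obtain ⟨hθ0, hθ1⟩ := hθ
  set D : ℝ := lam ^ 2 * (1 - θ) ^ 2 with hD
  set p : ℝ := Real.exp (-lam * θ * τ) with hp
  set q : ℝ := Real.exp (-lam * τ) with hq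
  have key : ∀ s : ℝ,
      ((Real.exp (-lam * θ * (s + τ)) - Real.exp (-lam * (s + τ))) / (lam * (1 - θ))) *
        ((Real.exp (-lam * θ * s) - Real.exp (-lam * s)) / (lam * (1 - θ)))
      = (p / D) * Real.exp (-(2 * lam * θ) * s)
        + ((-(p + q) / D) * Real.exp (-(lam * (1 + θ)) * s)
          + (q / D) * Real.exp (-(2 * lam) * s)) := by
    intro s
    have h1 : Real.exp (-lam * θ * (s + τ)) = Real.exp (-lam * θ * s) * p := by
      rw [hp, ← Real.exp_add]; congr 1; ring
    have h2 : Real.exp (-lam * (s + τ)) = Real.exp (-lam * s) * q := by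
      rw [hq, ← Real.exp_add]; congr 1; ring
    have h3 : Real.exp (-(2 * lam * θ) * s) = Real.exp (-lam * θ * s) * Real.exp (-lam * θ * s) := by
      rw [← Real.exp_add]; congr 1; ring
    have h4 : Real.exp (-(lam * (1 + θ)) * s) = Real.exp (-lam * θ * s) * Real.exp (-lam * s) := by
      rw [← Real.exp_add]; congr 1; ring
    have h5 : Real.exp (-(2 * lam) * s) = Real.exp (-lam * s) * Real.exp (-lam * s) := by
      rw [← Real.exp_add]; congr 1; ring
    rw [h1, h2, h3, h4, h5, hD]
    have hl : lam ≠ 0 := ne_of_gt hlam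
    have ht : (1 : ℝ) - θ ≠ 0 := by nlinarith
    field_simp
    ring
  simp only [key]
  have hb1 : (0:ℝ) < 2 * lam * θ := by positivity
  have hb2 : (0:ℝ) < lam * (1 + θ) := by nlinarith
  have hb3 : (0:ℝ) < 2 * lam := by positivity
  have i1 : IntegrableOn (fun s => (p / D) * Real.exp (-(2 * lam * θ) * s)) (Set.Ioi (0:ℝ)) :=
    (exp_neg_integrableOn_Ioi 0 hb1).const_mul _
  have i2 : IntegrableOn (fun s => (-(p + q) / D) * Real.exp (-(lam * (1 + θ)) * s)) (Set.Ioi (0:ℝ)) :=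
    (exp_neg_integrableOn_Ioi 0 hb2).const_mul _
  have i3 : IntegrableOn (fun s => (q / D) * Real.exp (-(2 * lam) * s)) (Set.Ioi (0:ℝ)) :=
    (exp_neg_integrableOn_Ioi 0 hb3).const_mul _
  have e1 : (∫ s in Set.Ioi (0:ℝ), ((p / D) * Real.exp (-(2 * lam * θ) * s)
        + ((-(p + q) / D) * Real.exp (-(lam * (1 + θ)) * s)
          + (q / D) * Real.exp (-(2 * lam) * s))))
      = (∫ s in Set.Ioi (0:ℝ), (p / D) * Real.exp (-(2 * lam * θ) * s))
        + ∫ s in Set.Ioi (0:ℝ), ((-(p + q) / D) * Real.exp (-(lam * (1 + θ)) * s)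
          + (q / D) * Real.exp (-(2 * lam) * s)) := integral_add i1 (i2.add i3)
  have e2 : (∫ s in Set.Ioi (0:ℝ), ((-(p + q) / D) * Real.exp (-(lam * (1 + θ)) * s)
          + (q / D) * Real.exp (-(2 * lam) * s)))
      = (∫ s in Set.Ioi (0:ℝ), (-(p + q) / D) * Real.exp (-(lam * (1 + θ)) * s))
        + ∫ s in Set.Ioi (0:ℝ), (q / D) * Real.exp (-(2 * lam) * s) := integral_add i2 i3
  rw [e1, e2,
    integral_const_mul, integral_const_mul, integral_const_mul,
    integral_exp_neg_mul_Ioi_zero hb1, integral_exp_neg_mul_Ioi_zero hb2,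
    integral_exp_neg_mul_Ioi_zero hb3, hD]
  have hl : lam ≠ 0 := ne_of_gt hlam
  have ht : (1 : ℝ) - θ ≠ 0 := by nlinarith
  have ht2 : (1 : ℝ) + θ ≠ 0 := by nlinarith
  have ht3 : (1 : ℝ) - θ ^ 2 ≠ 0 := by nlinarith
  have hθ' : θ ≠ 0 := ne_of_gt hθ0
  field_simp
  ring
end

section
/- For r > 0 and ψ ∈ (π/2,π): ∫₀^∞ e^{r s cos ψ} |sin(r s sin ψ)|/(r sin ψ) ds = r^{-2} coth(π|cot ψ|/2). -/
open MeasureTheory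
open scoped Real

/-- The hyperbolic cotangent. -/
noncomputable def realCoth (x : ℝ) : ℝ := Real.cosh x / Real.sinh x

private lemma cos_nat_mul_pi' (k : ℕ) : Real.cos ((k : ℝ) * π) = (-1) ^ k := by
  simpa using Real.cos_nat_mul_pi_sub 0 k

private lemma per_interval (p : ℝ) (k : ℕ) :
    ∫ u in Set.Ioc ((k : ℝ) * π) (((k : ℝ) + 1) * π), Real.exp (-p * u) * |Real.sin u|
      = Real.exp (-p * ((k : ℝ) * π)) * (1 + Real.exp (-p * π)) / (p ^ 2 + 1) := by
  have hle : (k : ℝ) * π ≤ ((k : ℝ) + 1) * π := by nlinarith [Real.pi_pos]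
  rw [← intervalIntegral.integral_of_le hle]
  have habs : Set.EqOn (fun u => Real.exp (-p * u) * |Real.sin u|)
      (fun u => (-1 : ℝ) ^ k * (Real.exp (-p * u) * Real.sin u))
      (Set.uIcc ((k : ℝ) * π) (((k : ℝ) + 1) * π)) := by
    intro u hu
    rw [Set.uIcc_of_le hle] at hu
    have hs : Real.sin u = (-1 : ℝ) ^ k * Real.sin (u - (k : ℝ) * π) := by
      have := Real.sin_add_nat_mul_pi (u - (k : ℝ) * π) k
      simpa using this
    have hnn : 0 ≤ Real.sin (u - (k : ℝ) * π) := by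
      apply Real.sin_nonneg_of_nonneg_of_le_pi
      · linarith [hu.1]
      · nlinarith [hu.2]
    simp only [hs, abs_mul, abs_pow, abs_neg, abs_one, one_pow, one_mul,
      abs_of_nonneg hnn]
    ring_nf
    rw [mul_comm k 2, pow_mul]
    norm_num
  rw [intervalIntegral.integral_congr habs, intervalIntegral.integral_const_mul]
  have hden : (0 : ℝ) < p ^ 2 + 1 := by positivity
  have hF : ∀ u : ℝ, HasDerivAt
      (fun u => Real.exp (-p * u) * (-p * Real.sin u - Real.cos u) / (p ^ 2 + 1))
      (Real.exp (-p * u) * Real.sin u) u := by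
    intro u
    have h1 : HasDerivAt (fun u => Real.exp (-p * u)) (-p * Real.exp (-p * u)) u := by
      simpa [mul_comm] using ((hasDerivAt_id u).const_mul (-p)).exp
    have h2 : HasDerivAt (fun u => -p * Real.sin u - Real.cos u)
        (-p * Real.cos u + Real.sin u) u := by
      exact (((Real.hasDerivAt_sin u).const_mul (-p)).sub (Real.hasDerivAt_cos u)).congr_deriv (by ring)
    have := ((h1.mul h2).div_const (p ^ 2 + 1))
    refine this.congr_deriv ?_
    rw [div_eq_iff hden.ne']
    ring
  have hint : IntervalIntegrable (fun u => Real.exp (-p * u) * Real.sin u) volume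
      ((k : ℝ) * π) (((k : ℝ) + 1) * π) := by
    apply Continuous.intervalIntegrable
    continuity
  rw [intervalIntegral.integral_eq_sub_of_hasDerivAt (fun u _ => hF u) hint]
  have hsk : Real.sin ((k : ℝ) * π) = 0 := by
    simpa using Real.sin_nat_mul_pi k
  have hsk1 : Real.sin (((k : ℝ) + 1) * π) = 0 := by
    have := Real.sin_nat_mul_pi (k + 1)
    push_cast at this
    simpa using this
  have hck : Real.cos ((k : ℝ) * π) = (-1 : ℝ) ^ k := cos_nat_mul_pi' k
  have hck1 : Real.cos (((k : ℝ) + 1) * π) = -(-1 : ℝ) ^ k := by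
    have := cos_nat_mul_pi' (k + 1)
    push_cast at this
    rw [this]; ring
  obtain ⟨A, hA, h4⟩ : ∃ A : ℝ, ((-1 : ℝ) ^ k = A) ∧ A * A = 1 :=
    ⟨(-1) ^ k, rfl, by rw [← pow_add, ← two_mul, pow_mul]; norm_num⟩
  rw [hsk, hsk1, hck, hck1, hA]
  have hexp : Real.exp (-p * (((k : ℝ) + 1) * π))
      = Real.exp (-p * ((k : ℝ) * π)) * Real.exp (-p * π) := by
    rw [← Real.exp_add]; ring_nf
  rw [hexp]
  obtain ⟨E, hE⟩ : ∃ E : ℝ, Real.exp (-p * ((k : ℝ) * π)) = E := ⟨_, rfl⟩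
  obtain ⟨Q, hQ⟩ : ∃ Q : ℝ, Real.exp (-p * π) = Q := ⟨_, rfl⟩
  rw [hE, hQ]
  linear_combination (E * (1 + Q) / (p ^ 2 + 1)) * h4

private lemma union_Ioc : (⋃ k : ℕ, Set.Ioc ((k : ℝ) * π) (((k : ℝ) + 1) * π)) = Set.Ioi 0 := by
  ext x
  simp only [Set.mem_iUnion, Set.mem_Ioc, Set.mem_Ioi]
  constructor
  · rintro ⟨k, h1, h2⟩
    have : (0 : ℝ) ≤ (k : ℝ) * π := by positivity
    linarith
  · intro hx
    have hπ := Real.pi_pos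
    refine ⟨⌈x / π⌉₊ - 1, ?_, ?_⟩
    · have hpos : 0 < x / π := div_pos hx hπ
      have h1 : 1 ≤ ⌈x / π⌉₊ := Nat.one_le_iff_ne_zero.mpr (by
        simp [Nat.ceil_eq_zero, not_le, hpos])
      have h2 : ((⌈x / π⌉₊ : ℝ) - 1) < x / π := by
        by_contra h
        push_neg at h
        have : ⌈x / π⌉₊ ≤ ⌈x / π⌉₊ - 1 := Nat.ceil_le.mpr (by
          push_cast [h1]; linarith)
        omega
      have : ((⌈x / π⌉₊ - 1 : ℕ) : ℝ) = (⌈x / π⌉₊ : ℝ) - 1 := by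
        push_cast [h1]; ring
      rw [this]
      calc ((⌈x / π⌉₊ : ℝ) - 1) * π < (x / π) * π := by
            apply mul_lt_mul_of_pos_right h2 hπ
        _ = x := div_mul_cancel₀ x hπ.ne'
    · have h3 : x / π ≤ ⌈x / π⌉₊ := Nat.le_ceil _
      have h1 : 1 ≤ ⌈x / π⌉₊ := Nat.one_le_iff_ne_zero.mpr (by
        simp [Nat.ceil_eq_zero, not_le, div_pos hx hπ])
      have : ((⌈x / π⌉₊ - 1 : ℕ) : ℝ) + 1 = (⌈x / π⌉₊ : ℝ) := by push_cast [h1]; ring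
      rw [this]
      calc x = (x / π) * π := (div_mul_cancel₀ x hπ.ne').symm
        _ ≤ (⌈x / π⌉₊ : ℝ) * π := by
            apply mul_le_mul_of_nonneg_right h3 hπ.le

private lemma key (p : ℝ) (hp : 0 < p) :
    ∫ u in Set.Ioi (0 : ℝ), Real.exp (-p * u) * |Real.sin u|
      = (1 + Real.exp (-p * π)) / ((1 - Real.exp (-p * π)) * (p ^ 2 + 1)) := by
  have hInt : IntegrableOn (fun u => Real.exp (-p * u) * |Real.sin u|) (Set.Ioi 0) := by
    apply Integrable.mono' (exp_neg_integrableOn_Ioi 0 hp)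
    · exact (Continuous.mul (by continuity) (by continuity)).aestronglyMeasurable
    · filter_upwards with u
      rw [Real.norm_eq_abs, abs_mul, abs_of_nonneg (Real.exp_pos _).le, abs_abs]
      calc Real.exp (-p * u) * |Real.sin u| ≤ Real.exp (-p * u) * 1 := by
            apply mul_le_mul_of_nonneg_left (Real.abs_sin_le_one u) (Real.exp_pos _).le
        _ = Real.exp (-p * u) := mul_one _
  have hdisj : Pairwise (Function.onFun Disjoint
      (fun k : ℕ => Set.Ioc ((k : ℝ) * π) (((k : ℝ) + 1) * π))) := by
    intro i j hij
    simp only [Function.onFun]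
    rw [Set.Ioc_disjoint_Ioc]
    have hπ := Real.pi_pos
    rcases lt_or_gt_of_ne hij with h | h
    · have hij' : (i : ℝ) + 1 ≤ (j : ℝ) := by exact_mod_cast h
      calc min (((i : ℝ) + 1) * π) (((j : ℝ) + 1) * π) ≤ ((i : ℝ) + 1) * π :=
            min_le_left _ _
        _ ≤ (j : ℝ) * π := by nlinarith
        _ ≤ max ((i : ℝ) * π) ((j : ℝ) * π) := le_max_right _ _
    · have hij' : (j : ℝ) + 1 ≤ (i : ℝ) := by exact_mod_cast h
      calc min (((i : ℝ) + 1) * π) (((j : ℝ) + 1) * π) ≤ ((j : ℝ) + 1) * π :=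
            min_le_right _ _
        _ ≤ (i : ℝ) * π := by nlinarith
        _ ≤ max ((i : ℝ) * π) ((j : ℝ) * π) := le_max_left _ _
  rw [← union_Ioc] at hInt ⊢
  rw [integral_iUnion (fun k => measurableSet_Ioc) hdisj hInt]
  have : ∀ k : ℕ, (∫ u in Set.Ioc ((k : ℝ) * π) (((k : ℝ) + 1) * π),
      Real.exp (-p * u) * |Real.sin u|)
      = (Real.exp (-p * π)) ^ k * ((1 + Real.exp (-p * π)) / (p ^ 2 + 1)) := by
    intro k
    rw [per_interval]
    rw [← Real.exp_nat_mul]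
    congr 1
    · congr 1; ring
  simp_rw [this]
  rw [tsum_mul_right, tsum_geometric_of_lt_one (Real.exp_pos _).le
    (Real.exp_lt_one_iff.mpr (by nlinarith [Real.pi_pos]))]
  rw [inv_mul_eq_div, div_div, mul_comm (p ^ 2 + 1)]

theorem stmt15 (r ψ : ℝ) (hr : 0 < r) (hψ : ψ ∈ Set.Ioo (π / 2) π) :
    ∫ s in Set.Ioi (0 : ℝ),
        Real.exp (r * s * Real.cos ψ) * |Real.sin (r * s * Real.sin ψ)| / (r * Real.sin ψ)
      = (r ^ 2)⁻¹ * realCoth (π * |Real.cot ψ| / 2) := by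
  obtain ⟨h1, h2⟩ := hψ
  have hπ := Real.pi_pos
  have hsin : 0 < Real.sin ψ := Real.sin_pos_of_pos_of_lt_pi (by linarith) h2
  have hcos : Real.cos ψ < 0 := by
    apply Real.cos_neg_of_pi_div_two_lt_of_lt h1 (by linarith)
  set p : ℝ := -Real.cot ψ with hp_def
  have hcot : Real.cot ψ = Real.cos ψ / Real.sin ψ := Real.cot_eq_cos_div_sin ψ
  have hp : 0 < p := by
    rw [hp_def, hcot]
    exact neg_pos.mpr (div_neg_of_neg_of_pos hcos hsin)
  have habs : |Real.cot ψ| = p := by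
    rw [abs_of_neg (by rw [hcot]; exact div_neg_of_neg_of_pos hcos hsin), hp_def]
  have hb : 0 < r * Real.sin ψ := by positivity
  -- change of variables
  have hcv : ∫ s in Set.Ioi (0 : ℝ),
      Real.exp (r * s * Real.cos ψ) * |Real.sin (r * s * Real.sin ψ)| / (r * Real.sin ψ)
      = (r * Real.sin ψ)⁻¹ • ∫ u in Set.Ioi (0 : ℝ),
          Real.exp (-p * u) * |Real.sin u| / (r * Real.sin ψ) := by
    have hchg := MeasureTheory.integral_comp_mul_left_Ioi
      (fun u => Real.exp (-p * u) * |Real.sin u| / (r * Real.sin ψ)) 0 hb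
    rw [mul_zero] at hchg
    rw [← hchg]
    apply setIntegral_congr_fun measurableSet_Ioi
    intro s hs
    simp only
    have harg : r * s * Real.cos ψ = -p * (r * Real.sin ψ * s) := by
      rw [hp_def, hcot]
      field_simp
    have harg2 : r * s * Real.sin ψ = r * Real.sin ψ * s := by ring
    rw [harg, harg2]
  rw [hcv, integral_div, smul_eq_mul, key p hp]
  have hq1 : Real.exp (-p * π) < 1 := Real.exp_lt_one_iff.mpr (by nlinarith)
  have hcoth : realCoth (π * p / 2) = (1 + Real.exp (-p * π)) / (1 - Real.exp (-p * π)) := by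
    unfold realCoth
    rw [Real.cosh_eq, Real.sinh_eq]
    obtain ⟨E, hE, hEpos, hq⟩ : ∃ E : ℝ, Real.exp (π * p / 2) = E ∧ 0 < E ∧
        Real.exp (-p * π) = E⁻¹ * E⁻¹ :=
      ⟨_, rfl, Real.exp_pos _, by rw [← Real.exp_neg, ← Real.exp_add]; congr 1; ring⟩
    have hE1 : 1 < E := by
      rw [← hE]
      exact Real.one_lt_exp_iff.mpr (by positivity)
    have hE0 : E ≠ 0 := ne_of_gt hEpos
    have hEi : E⁻¹ < 1 := inv_lt_one_of_one_lt₀ hE1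
    have h6 : E - E⁻¹ ≠ 0 := ne_of_gt (by linarith)
    have h7 : 1 - E⁻¹ * E⁻¹ ≠ 0 := ne_of_gt (by nlinarith [inv_pos.mpr hEpos])
    rw [hE, Real.exp_neg, hE, hq]
    field_simp
    all_goals ring
  rw [habs, hcoth]
  have hsin2 : Real.sin ψ ^ 2 * (p ^ 2 + 1) = 1 := by
    have : p ^ 2 = Real.cos ψ ^ 2 / Real.sin ψ ^ 2 := by
      rw [hp_def, hcot]; field_simp
    rw [this]
    field_simp
    all_goals nlinarith [Real.sin_sq_add_cos_sq ψ]
  obtain ⟨Q, hQ⟩ : ∃ Q : ℝ, Real.exp (-p * π) = Q := ⟨_, rfl⟩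
  rw [hQ]
  rw [div_div, inv_mul_eq_div, div_div]
  rw [show (1 - Q) * (p ^ 2 + 1) * (r * Real.sin ψ) * (r * Real.sin ψ)
      = (1 - Q) * r ^ 2 from by linear_combination ((1 - Q) * r ^ 2) * hsin2]
  rw [inv_mul_eq_div, div_div]
end

section
/- For r > 0 and ψ ∈ (π/2,π) and τ ≥ 0: ∫₀^∞ e^{r(s+τ)cos ψ} sin(r(s+τ) sin ψ) · e^{r s cos ψ} sin(r s sin ψ)/(r sin ψ)² ds = (e^{rτ cos ψ}/(2 r³ sin 2ψ))·sin(rτ sin ψ − ψ). -/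
open MeasureTheory Filter
open scoped Real

set_option maxHeartbeats 1000000 in
theorem stmt16 (r ψ τ : ℝ) (hr : 0 < r) (hψ : ψ ∈ Set.Ioo (π / 2) π) (hτ : 0 ≤ τ) :
    ∫ s in Set.Ioi (0 : ℝ),
        Real.exp (r * (s + τ) * Real.cos ψ) * Real.sin (r * (s + τ) * Real.sin ψ) *
          (Real.exp (r * s * Real.cos ψ) * Real.sin (r * s * Real.sin ψ)) /
            (r * Real.sin ψ) ^ 2
      = Real.exp (r * τ * Real.cos ψ) / (2 * r ^ 3 * Real.sin (2 * ψ)) *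
          Real.sin (r * τ * Real.sin ψ - ψ) := by
  obtain ⟨hψ1, hψ2⟩ := hψ
  have hπ := Real.pi_pos
  have hs : 0 < Real.sin ψ := Real.sin_pos_of_pos_of_lt_pi (by linarith) hψ2
  have hc : Real.cos ψ < 0 := Real.cos_neg_of_pi_div_two_lt_of_lt hψ1 (by linarith)
  set a := r * Real.cos ψ with ha
  set b := r * Real.sin ψ with hb
  have hA : a < 0 := mul_neg_of_pos_of_neg hr hc
  have hB : 0 < b := mul_pos hr hs
  have hab : a ^ 2 + b ^ 2 = r ^ 2 := by
    have h := Real.sin_sq_add_cos_sq ψ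
    rw [ha, hb]; nlinarith [h]
  clear_value a b
  set f : ℝ → ℝ := fun s =>
    Real.exp (r * (s + τ) * Real.cos ψ) * Real.sin (r * (s + τ) * Real.sin ψ) *
      (Real.exp (r * s * Real.cos ψ) * Real.sin (r * s * Real.sin ψ)) /
        b ^ 2 with hf
  set F : ℝ → ℝ := fun s => Real.exp (a * τ) / (2 * b ^ 2) *
      (Real.cos (b * τ) * Real.exp (2 * a * s) / (2 * a)
        - Real.exp (2 * a * s) * (a * Real.cos (2 * b * s + b * τ)
            + b * Real.sin (2 * b * s + b * τ)) / (2 * r ^ 2)) with hF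
  -- product-to-sum identity
  have key : ∀ s : ℝ, Real.cos (b * τ) - Real.cos (2 * b * s + b * τ)
      = 2 * Real.sin (b * (s + τ)) * Real.sin (b * s) := by
    intro s
    have h := Real.cos_sub_cos (b * τ) (2 * b * s + b * τ)
    have e1 : (b * τ + (2 * b * s + b * τ)) / 2 = b * (s + τ) := by ring
    have e2 : (b * τ - (2 * b * s + b * τ)) / 2 = -(b * s) := by ring
    rw [e1, e2, Real.sin_neg] at h
    linear_combination h
  -- alternate form of integrand
  have hf_eq : ∀ s : ℝ, f s
      = Real.exp (a * τ) * Real.exp (2 * a * s)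
          * (Real.cos (b * τ) - Real.cos (2 * b * s + b * τ)) / (2 * b ^ 2) := by
    intro s
    have e1 : r * (s + τ) * Real.cos ψ = a * (s + τ) := by rw [ha]; ring
    have e2 : r * (s + τ) * Real.sin ψ = b * (s + τ) := by rw [hb]; ring
    have e3 : r * s * Real.cos ψ = a * s := by rw [ha]; ring
    have e4 : r * s * Real.sin ψ = b * s := by rw [hb]; ring
    have hexp : Real.exp (a * (s + τ)) * Real.exp (a * s)
        = Real.exp (a * τ) * Real.exp (2 * a * s) := by
      rw [← Real.exp_add, ← Real.exp_add]; ring_nf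
    rw [hf]; simp only [e1, e2, e3, e4, key s]
    linear_combination (Real.sin (b * (s + τ)) * Real.sin (b * s) / b ^ 2) * hexp
  have hderiv : ∀ s : ℝ, HasDerivAt F (f s) s := by
    intro s
    have h1 : HasDerivAt (fun s : ℝ => 2 * a * s) (2 * a) s := by
      simpa using (hasDerivAt_id s).const_mul (2 * a)
    have hE : HasDerivAt (fun s : ℝ => Real.exp (2 * a * s))
        (Real.exp (2 * a * s) * (2 * a)) s := h1.exp
    have hθ : HasDerivAt (fun s : ℝ => 2 * b * s + b * τ) (2 * b) s := by
      simpa using ((hasDerivAt_id s).const_mul (2 * b)).add_const (b * τ)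
    have hcos := hθ.cos
    have hsin := hθ.sin
    have hD : HasDerivAt F (Real.exp (a * τ) / (2 * b ^ 2) *
        (Real.cos (b * τ) * (Real.exp (2 * a * s) * (2 * a)) / (2 * a)
          - ((Real.exp (2 * a * s) * (2 * a)) * (a * Real.cos (2 * b * s + b * τ)
              + b * Real.sin (2 * b * s + b * τ))
            + Real.exp (2 * a * s) * (a * (-Real.sin (2 * b * s + b * τ) * (2 * b))
              + b * (Real.cos (2 * b * s + b * τ) * (2 * b)))) / (2 * r ^ 2))) s := by
      have t1 : HasDerivAt (fun s : ℝ => Real.cos (b * τ) * Real.exp (2 * a * s) / (2 * a))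
          (Real.cos (b * τ) * (Real.exp (2 * a * s) * (2 * a)) / (2 * a)) s :=
        (hE.const_mul (Real.cos (b * τ))).div_const (2 * a)
      have t2 : HasDerivAt (fun s : ℝ => Real.exp (2 * a * s)
          * (a * Real.cos (2 * b * s + b * τ) + b * Real.sin (2 * b * s + b * τ)))
          ((Real.exp (2 * a * s) * (2 * a)) * (a * Real.cos (2 * b * s + b * τ)
              + b * Real.sin (2 * b * s + b * τ))
            + Real.exp (2 * a * s) * (a * (-Real.sin (2 * b * s + b * τ) * (2 * b))
              + b * (Real.cos (2 * b * s + b * τ) * (2 * b)))) s :=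
        hE.mul ((hcos.const_mul a).add (hsin.const_mul b))
      exact ((t1.sub (t2.div_const (2 * r ^ 2))).const_mul _)
    convert hD using 1
    rw [hf_eq s]
    field_simp [hA.ne, hB.ne', hr.ne']
    linear_combination Real.cos (b * (2 * s + τ)) * hab
  -- integrability
  have hint : IntegrableOn f (Set.Ioi (0 : ℝ)) := by
    have hg : IntegrableOn (fun s : ℝ => Real.exp (a * τ) / b ^ 2 * Real.exp (2 * a * s))
        (Set.Ioi (0 : ℝ)) := by
      have := (exp_neg_integrableOn_Ioi 0 (show (0:ℝ) < -(2 * a) by linarith))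
      simpa [IntegrableOn] using this.const_mul (Real.exp (a * τ) / b ^ 2)
    have hmeas : AEStronglyMeasurable f (volume.restrict (Set.Ioi (0 : ℝ))) := by
      have : Continuous f := by rw [hf]; fun_prop
      exact this.aestronglyMeasurable.restrict
    refine MeasureTheory.Integrable.mono hg hmeas (Filter.Eventually.of_forall fun s => ?_)
    rw [hf_eq s]
    have h1 : |Real.cos (b * τ) - Real.cos (2 * b * s + b * τ)| ≤ 2 := by
      have := Real.neg_one_le_cos (b * τ)
      have := Real.cos_le_one (b * τ)
      have := Real.neg_one_le_cos (2 * b * s + b * τ)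
      have := Real.cos_le_one (2 * b * s + b * τ)
      rw [abs_le]; constructor <;> linarith
    have hE : (0:ℝ) < Real.exp (a * τ) * Real.exp (2 * a * s) := by positivity
    rw [Real.norm_eq_abs, Real.norm_eq_abs, abs_div, abs_mul]
    rw [abs_of_pos hE, abs_of_pos (show (0:ℝ) < 2 * b ^ 2 by positivity)]
    rw [abs_of_pos (show (0:ℝ) < Real.exp (a * τ) / b ^ 2 * Real.exp (2 * a * s) by positivity)]
    rw [div_le_iff₀ (show (0:ℝ) < 2 * b ^ 2 by positivity)]
    have := mul_le_mul_of_nonneg_left h1 hE.le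
    calc Real.exp (a * τ) * Real.exp (2 * a * s) * |Real.cos (b * τ) - Real.cos (2 * b * s + b * τ)|
        ≤ Real.exp (a * τ) * Real.exp (2 * a * s) * 2 := this
      _ = Real.exp (a * τ) / b ^ 2 * Real.exp (2 * a * s) * (2 * b ^ 2) := by
          field_simp
  -- limit at infinity
  have hlim : Tendsto F atTop (nhds 0) := by
    have hexp : Tendsto (fun s : ℝ => Real.exp (2 * a * s)) atTop (nhds 0) := by
      have h1 : Tendsto (fun s : ℝ => -(2 * a) * s) atTop atTop :=
        tendsto_id.const_mul_atTop (by linarith)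
      have := Real.tendsto_exp_neg_atTop_nhds_zero.comp h1
      simpa [Function.comp_def, neg_mul, neg_neg] using this
    set C : ℝ := Real.exp (a * τ) / (2 * b ^ 2) * (1 / (2 * (-a)) + (-a + b) / (2 * r ^ 2)) with hC
    have hCexp : Tendsto (fun s : ℝ => C * Real.exp (2 * a * s)) atTop (nhds 0) := by
      simpa using hexp.const_mul C
    apply squeeze_zero_norm _ hCexp
    intro s
    have hE : (0:ℝ) < Real.exp (2 * a * s) := Real.exp_pos _
    have hc1 : |Real.cos (b * τ)| ≤ 1 := Real.abs_cos_le_one _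
    have hc2 : |Real.cos (2 * b * s + b * τ)| ≤ 1 := Real.abs_cos_le_one _
    have hs2 : |Real.sin (2 * b * s + b * τ)| ≤ 1 := Real.abs_sin_le_one _
    rw [Real.norm_eq_abs, hF]
    rw [abs_mul, abs_of_pos (show (0:ℝ) < Real.exp (a * τ) / (2 * b ^ 2) by positivity)]
    have habs : |Real.cos (b * τ) * Real.exp (2 * a * s) / (2 * a)
        - Real.exp (2 * a * s) * (a * Real.cos (2 * b * s + b * τ)
            + b * Real.sin (2 * b * s + b * τ)) / (2 * r ^ 2)|
        ≤ (1 / (2 * (-a)) + (-a + b) / (2 * r ^ 2)) * Real.exp (2 * a * s) := by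
      have t1 : |Real.cos (b * τ) * Real.exp (2 * a * s) / (2 * a)|
          ≤ 1 / (2 * (-a)) * Real.exp (2 * a * s) := by
        rw [abs_div, abs_mul, abs_of_pos hE, abs_of_neg (show 2 * a < 0 by linarith)]
        rw [div_le_iff₀ (show (0:ℝ) < -(2*a) by linarith)]
        calc |Real.cos (b * τ)| * Real.exp (2 * a * s) ≤ 1 * Real.exp (2 * a * s) := by
              gcongr
          _ = 1 / (2 * -a) * Real.exp (2 * a * s) * -(2 * a) := by
              field_simp [hA.ne]
      have t2 : |Real.exp (2 * a * s) * (a * Real.cos (2 * b * s + b * τ)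
            + b * Real.sin (2 * b * s + b * τ)) / (2 * r ^ 2)|
          ≤ (-a + b) / (2 * r ^ 2) * Real.exp (2 * a * s) := by
        rw [abs_div, abs_mul, abs_of_pos hE, abs_of_pos (show (0:ℝ) < 2 * r ^ 2 by positivity)]
        rw [div_le_iff₀ (show (0:ℝ) < 2 * r ^ 2 by positivity)]
        have hin : |a * Real.cos (2 * b * s + b * τ) + b * Real.sin (2 * b * s + b * τ)|
            ≤ -a + b := by
          calc |a * Real.cos (2 * b * s + b * τ) + b * Real.sin (2 * b * s + b * τ)|
              ≤ |a * Real.cos (2 * b * s + b * τ)| + |b * Real.sin (2 * b * s + b * τ)| :=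
                abs_add_le _ _
            _ ≤ -a + b := by
                rw [abs_mul, abs_mul, abs_of_neg hA, abs_of_pos hB]
                have := mul_le_mul_of_nonneg_left hc2 (neg_nonneg.2 hA.le)
                have := mul_le_mul_of_nonneg_left hs2 hB.le
                nlinarith
        calc Real.exp (2 * a * s) * |a * Real.cos (2 * b * s + b * τ)
              + b * Real.sin (2 * b * s + b * τ)| ≤ Real.exp (2 * a * s) * (-a + b) := by gcongr
          _ = (-a + b) / (2 * r ^ 2) * Real.exp (2 * a * s) * (2 * r ^ 2) := by
              field_simp
      calc |Real.cos (b * τ) * Real.exp (2 * a * s) / (2 * a)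
          - Real.exp (2 * a * s) * (a * Real.cos (2 * b * s + b * τ)
              + b * Real.sin (2 * b * s + b * τ)) / (2 * r ^ 2)|
          ≤ |Real.cos (b * τ) * Real.exp (2 * a * s) / (2 * a)|
            + |Real.exp (2 * a * s) * (a * Real.cos (2 * b * s + b * τ)
              + b * Real.sin (2 * b * s + b * τ)) / (2 * r ^ 2)| := abs_sub _ _
        _ ≤ 1 / (2 * (-a)) * Real.exp (2 * a * s) + (-a + b) / (2 * r ^ 2) * Real.exp (2 * a * s) :=
            add_le_add t1 t2
        _ = (1 / (2 * (-a)) + (-a + b) / (2 * r ^ 2)) * Real.exp (2 * a * s) := by ring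
    calc Real.exp (a * τ) / (2 * b ^ 2) * |Real.cos (b * τ) * Real.exp (2 * a * s) / (2 * a)
          - Real.exp (2 * a * s) * (a * Real.cos (2 * b * s + b * τ)
              + b * Real.sin (2 * b * s + b * τ)) / (2 * r ^ 2)|
        ≤ Real.exp (a * τ) / (2 * b ^ 2)
            * ((1 / (2 * (-a)) + (-a + b) / (2 * r ^ 2)) * Real.exp (2 * a * s)) := by
          gcongr
      _ = C * Real.exp (2 * a * s) := by rw [hC]; ring
  have hmain : ∫ s in Set.Ioi (0 : ℝ), f s = 0 - F 0 :=
    integral_Ioi_of_hasDerivAt_of_tendsto (hderiv 0).continuousAt.continuousWithinAt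
      (fun x _ => hderiv x) hint hlim
  show (∫ s in Set.Ioi (0 : ℝ), f s) = _
  rw [hmain]
  have hstep : 0 - F 0 = Real.exp (a * τ)
      * (a * Real.sin (b * τ) - b * Real.cos (b * τ)) / (4 * a * b * r ^ 2) := by
    rw [hF]
    simp only [mul_zero, Real.exp_zero, mul_one, zero_add]
    field_simp [hA.ne, hB.ne', hr.ne']
    linear_combination 4 * Real.exp (a * τ) * Real.cos (τ * b) * hab
  have e5 : r * τ * Real.cos ψ = a * τ := by rw [ha]; ring
  have e6 : r * τ * Real.sin ψ = b * τ := by rw [hb]; ring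
  rw [hstep, e5, e6, Real.sin_two_mul, Real.sin_sub, ha, hb]
  have hd1 : 4 * (r * Real.cos ψ) * (r * Real.sin ψ) * r ^ 2 ≠ 0 :=
    mul_ne_zero (mul_ne_zero (mul_ne_zero four_ne_zero (mul_ne_zero hr.ne' hc.ne))
      (mul_ne_zero hr.ne' hs.ne')) (pow_ne_zero 2 hr.ne')
  have hd2 : 2 * r ^ 3 * (2 * Real.sin ψ * Real.cos ψ) ≠ 0 :=
    mul_ne_zero (mul_ne_zero two_ne_zero (pow_ne_zero 3 hr.ne'))
      (mul_ne_zero (mul_ne_zero two_ne_zero hs.ne') hc.ne)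
  rw [div_mul_eq_mul_div, div_eq_div_iff hd1 hd2]
  ring
end

section
/- For every a > 0 and x with |x| > a·e/2 > 0, the Lambert W values W₀(−a/(2|x|)) and W₋₁(−a/(2|x|)) satisfy W₀(−a/(2|x|)) − W₋₁(−a/(2|x|)) ≤ 2·log(2|x|/a), and moreover the set of s > 0 for which |x|·s·e^{−as/2} > 1 is exactly the open interval (−(2/a)W₀(−a/(2|x|)), −(2/a)W₋₁(−a/(2|x|))). -/
open Real Set

private lemma fmono19 : StrictMonoOn (fun w : ℝ => w * Real.exp w) (Set.Ici (-1 : ℝ)) := by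
  apply strictMonoOn_of_deriv_pos (convex_Ici _)
  · exact (continuous_id.mul Real.continuous_exp).continuousOn
  · intro y hy
    rw [interior_Ici, Set.mem_Ioi] at hy
    have h : HasDerivAt (fun w : ℝ => w * Real.exp w) ((1 + y) * Real.exp y) y := by
      have : HasDerivAt (fun w : ℝ => w * Real.exp w) (1 * Real.exp y + id y * Real.exp y) y := (hasDerivAt_id y).mul (Real.hasDerivAt_exp y)
      convert this using 1
      simp only [id_eq]
      ring
    rw [h.deriv]
    have h1 : 0 < 1 + y := by linarith
    positivity

private lemma fanti19 : StrictAntiOn (fun w : ℝ => w * Real.exp w) (Set.Iic (-1 : ℝ)) := by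
  apply strictAntiOn_of_deriv_neg (convex_Iic _)
  · exact (continuous_id.mul Real.continuous_exp).continuousOn
  · intro y hy
    rw [interior_Iic, Set.mem_Iio] at hy
    have h : HasDerivAt (fun w : ℝ => w * Real.exp w) ((1 + y) * Real.exp y) y := by
      have : HasDerivAt (fun w : ℝ => w * Real.exp w) (1 * Real.exp y + id y * Real.exp y) y := (hasDerivAt_id y).mul (Real.hasDerivAt_exp y)
      convert this using 1
      simp only [id_eq]
      ring
    rw [h.deriv]
    have h1 : 1 + y < 0 := by linarith
    exact mul_neg_of_neg_of_pos h1 (Real.exp_pos y)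

theorem stmt19 (a x : ℝ) (ha : 0 < a) (hx : |x| > a * Real.exp 1 / 2)
    (w0 w1 : ℝ) (hw0 : -1 ≤ w0) (hw1 : w1 ≤ -1)
    (hW0 : w0 * Real.exp w0 = -a / (2 * |x|))
    (hW1 : w1 * Real.exp w1 = -a / (2 * |x|)) :
    w0 - w1 ≤ 2 * Real.log (2 * |x| / a)
      ∧ {s : ℝ | 0 < s ∧ |x| * s * Real.exp (-a * s / 2) > 1}
          = Set.Ioo (-(2 / a) * w0) (-(2 / a) * w1) := by
  have hxpos : 0 < |x| := lt_trans (by positivity) hx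
  set u : ℝ := a / (2 * |x|) with hu
  have hupos : 0 < u := by positivity
  have hW0' : w0 * Real.exp w0 = -u := by rw [hW0, hu, neg_div]
  have hW1' : w1 * Real.exp w1 = -u := by rw [hW1, hu, neg_div]
  have hw0neg : w0 < 0 := by
    by_contra hc
    push_neg at hc
    nlinarith [Real.exp_pos w0, mul_nonneg hc (Real.exp_pos w0).le]
  set L : ℝ := Real.log (2 * |x| / a) with hL
  have hratio : Real.exp 1 < 2 * |x| / a := by
    rw [lt_div_iff₀ ha]
    nlinarith
  have hL1 : 1 < L := by
    rw [hL, ← Real.log_exp 1]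
    exact Real.log_lt_log (Real.exp_pos 1) hratio
  have hexpL : Real.exp L = 2 * |x| / a := Real.exp_log (by positivity)
  have huexp : u * Real.exp L = 1 := by
    rw [hexpL, hu]; field_simp
  have hexpnegL : Real.exp (-L) = u := by
    have := Real.exp_neg L
    rw [this, hexpL, hu]
    field_simp
  -- 2L < exp L
  have h2L : 2 * L < Real.exp L := by
    have h1 : L ≤ Real.exp (L - 1) := by
      have := Real.add_one_le_exp (L - 1); linarith
    have h2 : Real.exp L = Real.exp 1 * Real.exp (L - 1) := by
      rw [← Real.exp_add]; ring_nf
    have he : (2 : ℝ) < Real.exp 1 := by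
      have := Real.exp_one_gt_d9; linarith
    nlinarith [Real.exp_pos (L - 1)]
  -- f(-2L) > -u
  have hfval : -u < (-(2 * L)) * Real.exp (-(2 * L)) := by
    have h1 : Real.exp (-(2 * L)) = u * u := by
      have : -(2 * L) = -L + -L := by ring
      rw [this, Real.exp_add, hexpnegL]
    rw [h1]
    have h2 : 2 * L * u < 1 := by
      calc 2 * L * u < Real.exp L * u := by
            exact mul_lt_mul_of_pos_right h2L hupos
        _ = 1 := by rw [mul_comm]; exact huexp
    nlinarith
  have hw1L : -(2 * L) < w1 := by
    by_contra hc
    push_neg at hc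
    have hmem1 : w1 ∈ Set.Iic (-1 : ℝ) := hw1
    have hmem2 : (-(2 * L)) ∈ Set.Iic (-1 : ℝ) := by
      simp only [Set.mem_Iic]; linarith
    have := fanti19.antitoneOn hmem1 hmem2 hc
    rw [hW1'] at this
    linarith
  refine ⟨by linarith, ?_⟩
  -- key equivalence for f
  have hkey : ∀ t : ℝ, t * Real.exp t < -u ↔ w1 < t ∧ t < w0 := by
    intro t
    constructor
    · intro h
      constructor
      · by_contra hc
        push_neg at hc
        have hmt : t ∈ Set.Iic (-1 : ℝ) := by simp only [Set.mem_Iic]; linarith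
        have hm1 : w1 ∈ Set.Iic (-1 : ℝ) := hw1
        have := fanti19.antitoneOn hmt hm1 hc
        rw [hW1'] at this
        linarith
      · by_contra hc
        push_neg at hc
        have hm0 : w0 ∈ Set.Ici (-1 : ℝ) := hw0
        have hmt : t ∈ Set.Ici (-1 : ℝ) := by simp only [Set.mem_Ici]; linarith
        have := fmono19.monotoneOn hm0 hmt hc
        rw [hW0'] at this
        linarith
    · rintro ⟨h1, h2⟩
      rcases le_or_gt t (-1) with hcase | hcase
      · have hmt : t ∈ Set.Iic (-1 : ℝ) := hcase
        have hm1 : w1 ∈ Set.Iic (-1 : ℝ) := hw1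
        have := fanti19 hm1 hmt h1
        simp only at this
        rw [hW1'] at this
        linarith
      · have hmt : t ∈ Set.Ici (-1 : ℝ) := le_of_lt hcase
        have hm0 : w0 ∈ Set.Ici (-1 : ℝ) := hw0
        have := fmono19 hmt hm0 h2
        simp only at this
        rw [hW0'] at this
        linarith
  have hcond : ∀ s : ℝ, (|x| * s * Real.exp (-a * s / 2) > 1 ↔
      (-a * s / 2) * Real.exp (-a * s / 2) < -u) := by
    intro s
    have hE := Real.exp_pos (-a * s / 2)
    have h1 : (-a * s / 2) * Real.exp (-a * s / 2)
        = -((a * s / 2) * Real.exp (-a * s / 2)) := by ring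
    rw [gt_iff_lt, h1, neg_lt_neg_iff, hu,
      div_lt_iff₀ (by positivity : (0:ℝ) < 2 * |x|)]
    constructor
    · intro h
      nlinarith [mul_lt_mul_of_pos_left h ha]
    · intro h
      nlinarith
  have hiff1 : ∀ r s : ℝ, (-(2 / a) * r < s ↔ -a * s / 2 < r) := by
    intro r s
    rw [show -(2 / a) * r = (-(2 * r)) / a by ring, div_lt_iff₀ ha]
    constructor <;> intro <;> linarith
  have hiff2 : ∀ r s : ℝ, (s < -(2 / a) * r ↔ r < -a * s / 2) := by
    intro r s
    rw [show -(2 / a) * r = (-(2 * r)) / a by ring, lt_div_iff₀ ha]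
    constructor <;> intro <;> linarith
  ext s
  simp only [Set.mem_setOf_eq, Set.mem_Ioo]
  constructor
  · rintro ⟨hs, hgt⟩
    obtain ⟨h21, h22⟩ := (hkey _).mp ((hcond s).mp hgt)
    exact ⟨(hiff1 w0 s).mpr h22, (hiff2 w1 s).mpr h21⟩
  · rintro ⟨h1, h2⟩
    have h1' := (hiff1 w0 s).mp h1
    have h2' := (hiff2 w1 s).mp h2
    have hs : 0 < s := by
      by_contra hsc
      push_neg at hsc
      have : a * s ≤ 0 := mul_nonpos_of_nonneg_of_nonpos ha.le hsc
      linarith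
    exact ⟨hs, (hcond s).mpr ((hkey _).mpr ⟨h2', h1'⟩)⟩
end
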